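/- arXiv:2501.00344 — 3 statements merged into one kernel-verified Lean document; each statement's English description precedes it below -/
import Mathlib

section
/- Fix ν > 0, let g(x) = ((3/2)x + ν^{3/2})^{2/3} − ν, and for k ∈ ℕ define p_k(x) = ν · (1/k!) · (log√((ν + g(x))/ν))^k. Define the operator I on continuous functions f : [0,∞) → [0,∞) by I(f)(x) = (1/2)·∫₀^x f(ℓ)/(ν + g(ℓ))^{3/2} dℓ. Then I(p_k) = p_{k+1} for every k ∈ ℕ. -/
open Real MeasureTheory

theorem stmt5 (ν : ℝ) (hν : 0 < ν) (g : ℝ → ℝ)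
    (hg : ∀ x, g x = ((3 / 2) * x + ν ^ ((3 : ℝ) / 2)) ^ ((2 : ℝ) / 3) - ν)
    (p : ℕ → ℝ → ℝ)
    (hp : ∀ k x, p k x = ν * (1 / (Nat.factorial k : ℝ)) *
        (Real.log (Real.sqrt ((ν + g x) / ν))) ^ k)
    (I : (ℝ → ℝ) → ℝ → ℝ)
    (hI : ∀ f x, I f x =
        (1 / 2) * ∫ ℓ in Set.Ioc (0 : ℝ) x, f ℓ / (ν + g ℓ) ^ ((3 : ℝ) / 2)) :
    ∀ k : ℕ, ∀ x, 0 ≤ x → I (p k) x = p (k + 1) x := by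
  intro k x hx
  have hc : (0:ℝ) < ν ^ ((3:ℝ)/2) := Real.rpow_pos_of_pos hν _
  set u : ℝ → ℝ := fun ℓ => (3/2) * ℓ + ν ^ ((3:ℝ)/2) with hudef
  have hupos : ∀ ℓ ∈ Set.Icc (0:ℝ) x, 0 < u ℓ := by
    intro ℓ hℓ
    have := hℓ.1
    simp only [hudef]
    nlinarith
  set L : ℝ → ℝ := fun ℓ => (1/3) * Real.log (u ℓ) - (1/2) * Real.log ν with hLdef
  -- ν + g ℓ = u ℓ ^ (2/3)
  have hng : ∀ ℓ, ν + g ℓ = u ℓ ^ ((2:ℝ)/3) := by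
    intro ℓ; rw [hg]; ring
  -- (ν + g ℓ)^(3/2) = u ℓ
  have hpow : ∀ ℓ, 0 < u ℓ → (ν + g ℓ) ^ ((3:ℝ)/2) = u ℓ := by
    intro ℓ h
    rw [hng ℓ, ← Real.rpow_mul h.le]
    norm_num
  -- log √((ν+g)/ν) = L
  have hlog : ∀ ℓ, 0 < u ℓ → Real.log (Real.sqrt ((ν + g ℓ)/ν)) = L ℓ := by
    intro ℓ h
    have h23 : (0:ℝ) < u ℓ ^ ((2:ℝ)/3) := Real.rpow_pos_of_pos h _
    rw [hng ℓ, Real.log_sqrt (by positivity), Real.log_div h23.ne' hν.ne',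
      Real.log_rpow h]
    simp only [hLdef]
    ring
  -- L 0 = 0
  have hL0 : L 0 = 0 := by
    simp only [hLdef, hudef]
    rw [mul_zero, zero_add, Real.log_rpow hν]
    ring
  -- derivative of L
  have hLderiv : ∀ ℓ ∈ Set.Icc (0:ℝ) x, HasDerivAt L (1 / (2 * u ℓ)) ℓ := by
    intro ℓ hℓ
    have h := hupos ℓ hℓ
    have hu' : HasDerivAt u (3/2) ℓ := by
      exact (((hasDerivAt_id ℓ).const_mul (3/2:ℝ)).add_const (ν ^ ((3:ℝ)/2))).congr_deriv (by ring)
    have := ((hu'.log h.ne').const_mul (1/3:ℝ)).sub_const ((1/2) * Real.log ν)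
    refine this.congr_deriv ?_
    have hne := h.ne'
    field_simp
  -- F
  set F : ℝ → ℝ := fun ℓ => ν / (Nat.factorial (k+1) : ℝ) * (L ℓ) ^ (k+1) with hFdef
  have hFderiv : ∀ ℓ ∈ Set.Icc (0:ℝ) x,
      HasDerivAt F (ν / (Nat.factorial k : ℝ) * (L ℓ) ^ k / (2 * u ℓ)) ℓ := by
    intro ℓ hℓ
    have h := hupos ℓ hℓ
    have := ((hLderiv ℓ hℓ).pow (k+1)).const_mul (ν / (Nat.factorial (k+1) : ℝ))
    refine this.congr_deriv ?_
    simp only [Nat.add_sub_cancel]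
    have hf : (Nat.factorial (k+1) : ℝ) = (k+1) * (Nat.factorial k : ℝ) := by
      rw [Nat.factorial_succ]; push_cast; ring
    have hfk : (Nat.factorial k : ℝ) ≠ 0 := Nat.cast_ne_zero.2 (Nat.factorial_ne_zero k)
    rw [hf]
    field_simp
    push_cast
    ring
  set f : ℝ → ℝ := fun ℓ => ν / (Nat.factorial k : ℝ) * (L ℓ) ^ k / (2 * u ℓ) with hfdef
  have hcontu : Continuous u := by
    simp only [hudef]; continuity
  have hfcont : ContinuousOn f (Set.Icc 0 x) := by
    apply ContinuousOn.div
    · apply ContinuousOn.mul continuousOn_const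
      apply ContinuousOn.pow
      simp only [hLdef]
      exact ((hcontu.continuousOn.log (fun ℓ hℓ => (hupos ℓ hℓ).ne')).const_smul (1/3:ℝ)).sub
        continuousOn_const
    · exact (continuous_const.mul hcontu).continuousOn
    · intro ℓ hℓ
      have := hupos ℓ hℓ
      positivity
  have hint : IntervalIntegrable f volume 0 x := by
    apply ContinuousOn.intervalIntegrable
    rwa [Set.uIcc_of_le hx]
  have key : ∫ ℓ in (0:ℝ)..x, f ℓ = F x - F 0 := by
    apply intervalIntegral.integral_eq_sub_of_hasDerivAt _ hint
    intro ℓ hℓ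
    rw [Set.uIcc_of_le hx] at hℓ
    exact hFderiv ℓ hℓ
  have hF0 : F 0 = 0 := by simp [hFdef, hL0]
  -- rewrite the set integral
  rw [hI]
  have hset : ∫ ℓ in Set.Ioc (0:ℝ) x, p k ℓ / (ν + g ℓ) ^ ((3:ℝ)/2)
      = ∫ ℓ in (0:ℝ)..x, p k ℓ / (ν + g ℓ) ^ ((3:ℝ)/2) :=
    (intervalIntegral.integral_of_le hx).symm
  have hcongr : ∫ ℓ in (0:ℝ)..x, p k ℓ / (ν + g ℓ) ^ ((3:ℝ)/2)
      = ∫ ℓ in (0:ℝ)..x, 2 * f ℓ := by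
    apply intervalIntegral.integral_congr
    intro ℓ hℓ
    rw [Set.uIcc_of_le hx] at hℓ
    have h := hupos ℓ hℓ
    show p k ℓ / (ν + g ℓ) ^ ((3:ℝ)/2) = 2 * f ℓ
    rw [hp, hlog ℓ h, hpow ℓ h]
    simp only [hfdef]
    field_simp
  rw [hset, hcongr, intervalIntegral.integral_const_mul, key, hF0, sub_zero]
  have hux : 0 < u x := hupos x ⟨hx, le_refl x⟩
  rw [hp, hlog x hux]
  simp only [hFdef]
  ring
end

section
/- There is an absolute constant C such that for all ν ∈ (0,1], A > 0 and M ≥ 0: ∫_{ℝ²} 1_{{ν^{1/2}|q₁| ≤ A}} / (A² + ν·q₁² + q₂² + M·ν·q₁²) dq ≤ C · ν^{-1/2} · (1 ∨ log(1+M)) / (1 ∨ M^{1/2}). -/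
open MeasureTheory Real

lemma aux_inner (b : ℝ) (hb : 0 < b) : ∫ y : ℝ, (b ^ 2 + y ^ 2)⁻¹ = Real.pi / b := by
  have h1 : (fun y : ℝ => (b ^ 2 + y ^ 2)⁻¹)
      = fun y : ℝ => b⁻¹ * b⁻¹ * (1 + (y / b) ^ 2)⁻¹ := by
    funext y
    have hb0 : b ≠ 0 := by positivity
    field_simp
  rw [h1, MeasureTheory.integral_const_mul]
  have h2 : (∫ y : ℝ, (1 + (y / b) ^ 2)⁻¹) = |b| • ∫ y : ℝ, (1 + y ^ 2)⁻¹ :=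
    MeasureTheory.Measure.integral_comp_div (fun y : ℝ => (1 + y ^ 2)⁻¹) b
  rw [h2, integral_univ_inv_one_add_sq, abs_of_pos hb, smul_eq_mul]
  field_simp

lemma aux_inner' (d : ℝ) (hd : 0 < d) :
    ∫ y : ℝ, (d + y ^ 2)⁻¹ = Real.pi / Real.sqrt d := by
  have h := aux_inner (Real.sqrt d) (Real.sqrt_pos.mpr hd)
  rwa [Real.sq_sqrt hd.le] at h

lemma aux_int_inv_sq (a : ℝ) (ha : 0 < a) : Integrable (fun y : ℝ => (a ^ 2 + y ^ 2)⁻¹) := by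
  have h1 : (fun y : ℝ => (a ^ 2 + y ^ 2)⁻¹)
      = fun y : ℝ => a⁻¹ * a⁻¹ * (1 + (y / a) ^ 2)⁻¹ := by
    funext y
    have ha0 : a ≠ 0 := by positivity
    field_simp
  rw [h1]
  exact (integrable_inv_one_add_sq.comp_div (ne_of_gt ha)).const_mul _

set_option maxHeartbeats 2000000 in
theorem stmt10 :
    ∃ C : ℝ, 0 < C ∧ ∀ ν A M : ℝ, 0 < ν → ν ≤ 1 → 0 < A → 0 ≤ M →
      (∫ q : ℝ × ℝ,
          if Real.sqrt ν * |q.1| ≤ A then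
            1 / (A ^ 2 + ν * q.1 ^ 2 + q.2 ^ 2 + M * ν * q.1 ^ 2)
          else 0)
        ≤ C * (Real.sqrt ν)⁻¹ * max 1 (Real.log (1 + M)) / max 1 (Real.sqrt M) := by
  refine ⟨24, by norm_num, fun ν A M hν hν1 hA hM => ?_⟩
  set sν := Real.sqrt ν with hsνdef
  have hsν0 : 0 < sν := Real.sqrt_pos.mpr hν
  set c : ℝ := (1 + M) * ν with hcdef
  have hc0 : 0 < c := by positivity
  set sc := Real.sqrt c with hscdef
  have hsc0 : 0 < sc := Real.sqrt_pos.mpr hc0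
  have hscν : sc = Real.sqrt (1 + M) * sν := Real.sqrt_mul (by linarith) ν
  set L := A / sν with hLdef
  have hL0 : 0 < L := by positivity
  set m := max 1 (Real.log (1 + M)) with hmdef
  set s := max 1 (Real.sqrt M) with hsdef
  have hm1 : (1:ℝ) ≤ m := le_max_left _ _
  have hs1 : (1:ℝ) ≤ s := le_max_left _ _
  -- the 2D integrand
  set F : ℝ × ℝ → ℝ := fun q =>
    if sν * |q.1| ≤ A then 1 / (A ^ 2 + ν * q.1 ^ 2 + q.2 ^ 2 + M * ν * q.1 ^ 2) else 0
    with hFdef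
  -- d x
  set d : ℝ → ℝ := fun x => A ^ 2 + ν * x ^ 2 + M * ν * x ^ 2 with hddef
  have hd0 : ∀ x, 0 < d x := fun x => by dsimp [d]; positivity
  -- membership equivalence
  have hmem : ∀ x : ℝ, (sν * |x| ≤ A) ↔ x ∈ Set.Icc (-L) L := by
    intro x
    rw [Set.mem_Icc, ← abs_le, le_div_iff₀ hsν0, mul_comm]
  -- measurability of F
  have hScl : MeasurableSet {q : ℝ × ℝ | sν * |q.1| ≤ A} := by
    apply measurableSet_le
    · exact (continuous_const.mul (continuous_abs.comp continuous_fst)).measurable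
    · exact measurable_const
  have hFcont : Continuous fun q : ℝ × ℝ =>
      1 / (A ^ 2 + ν * q.1 ^ 2 + q.2 ^ 2 + M * ν * q.1 ^ 2) := by
    apply Continuous.div continuous_const
    · fun_prop
    · intro q; positivity
  have hFmeas : AEStronglyMeasurable F volume := by
    have : F = Set.indicator {q : ℝ × ℝ | sν * |q.1| ≤ A}
        (fun q => 1 / (A ^ 2 + ν * q.1 ^ 2 + q.2 ^ 2 + M * ν * q.1 ^ 2)) := by
      funext q
      rw [Set.indicator_apply]
      simp only [Set.mem_setOf_eq]
      rfl
    rw [this]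
    exact (hFcont.measurable.indicator hScl).aestronglyMeasurable
  have hFnonneg : ∀ q, 0 ≤ F q := by
    intro q
    dsimp [F]
    split
    · positivity
    · exact le_refl 0
  -- majorant for integrability of F
  have hmaj : Integrable (fun q : ℝ × ℝ =>
      (Set.Icc (-L) L).indicator (fun _ => (1:ℝ)) q.1 * (A ^ 2 + q.2 ^ 2)⁻¹) volume := by
    rw [MeasureTheory.Measure.volume_eq_prod]
    refine Integrable.mul_prod (f := (Set.Icc (-L) L).indicator (fun _ => (1:ℝ)))
      (g := fun y => (A ^ 2 + y ^ 2)⁻¹) ?_ ?_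
    · rw [integrable_indicator_iff measurableSet_Icc]
      apply (integrableOn_const_iff).mpr
      right
      rw [Real.volume_Icc]
      exact ENNReal.ofReal_lt_top
    · exact aux_int_inv_sq A hA
  have hFint : Integrable F volume := by
    apply hmaj.mono' hFmeas
    filter_upwards with q
    rw [Real.norm_eq_abs, abs_of_nonneg (hFnonneg q)]
    dsimp [F]
    split
    · rename_i h
      rw [Set.indicator_of_mem ((hmem q.1).mp h), one_mul, one_div]
      have h1 : (0:ℝ) ≤ ν * q.1 ^ 2 := by positivity
      have h2 : (0:ℝ) ≤ M * ν * q.1 ^ 2 := by positivity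
      apply inv_anti₀ (by positivity)
      linarith
    · exact mul_nonneg (Set.indicator_nonneg (fun _ _ => zero_le_one) _) (by positivity)
  -- Fubini
  have hFub : (∫ q : ℝ × ℝ, F q) = ∫ x : ℝ, ∫ y : ℝ, F (x, y) := by
    rw [MeasureTheory.Measure.volume_eq_prod] at hFint ⊢
    exact MeasureTheory.integral_prod F hFint
  -- inner evaluation
  have hinner : ∀ x : ℝ, (∫ y : ℝ, F (x, y))
      = if sν * |x| ≤ A then Real.pi / Real.sqrt (d x) else 0 := by
    intro x
    by_cases hx : sν * |x| ≤ A
    · rw [if_pos hx]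
      have hfe : (fun y : ℝ => F (x, y)) = fun y : ℝ => (d x + y ^ 2)⁻¹ := by
        funext y
        dsimp [F]
        rw [if_pos hx, one_div]
        congr 1
        dsimp [d]
        ring
      rw [hfe, aux_inner' (d x) (hd0 x)]
    · rw [if_neg hx]
      have hfe : (fun y : ℝ => F (x, y)) = fun _ => (0:ℝ) := by
        funext y; dsimp [F]; rw [if_neg hx]
      rw [hfe, integral_zero]
  -- the one-dimensional majorant g
  set g : ℝ → ℝ :=
    fun x => (Set.Icc (-L) L).indicator (fun x => 2 * Real.pi / (A + sc * |x|)) x with hgdef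
  have hgcont : Continuous fun x : ℝ => 2 * Real.pi / (A + sc * |x|) := by
    apply Continuous.div continuous_const (by fun_prop)
    intro x; positivity
  have hgint : Integrable g :=
    (hgcont.continuousOn.integrableOn_compact isCompact_Icc).integrable_indicator
      measurableSet_Icc
  have hle : (∫ x : ℝ, ∫ y : ℝ, F (x, y)) ≤ ∫ x, g x := by
    apply integral_mono_of_nonneg
    · filter_upwards with x
      rw [hinner x]
      split
      · positivity
      · exact le_refl 0
    · exact hgint
    · filter_upwards with x
      rw [hinner x]
      by_cases hx : sν * |x| ≤ A
      · rw [if_pos hx]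
        dsimp only [g]
        rw [Set.indicator_of_mem ((hmem x).mp hx)]
        have hA' : A ≤ Real.sqrt (d x) := by
          rw [show A = Real.sqrt (A ^ 2) from (Real.sqrt_sq hA.le).symm]
          apply Real.sqrt_le_sqrt
          have h1 : (0:ℝ) ≤ ν * x ^ 2 := by positivity
          have h2 : (0:ℝ) ≤ M * ν * x ^ 2 := by positivity
          dsimp [d]; linarith
        have hsc' : sc * |x| ≤ Real.sqrt (d x) := by
          have he : sc * |x| = Real.sqrt (c * x ^ 2) := by
            rw [Real.sqrt_mul hc0.le, Real.sqrt_sq_eq_abs]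
          rw [he]
          apply Real.sqrt_le_sqrt
          have h2 : (0:ℝ) ≤ A ^ 2 := by positivity
          dsimp [d, c]; nlinarith
        rw [div_le_div_iff₀ (Real.sqrt_pos.mpr (hd0 x)) (by positivity)]
        nlinarith [Real.pi_pos]
      · rw [if_neg hx]
        exact Set.indicator_nonneg (fun y _ => by positivity) x
  -- evaluation of the integral of g
  have hIi1 : IntervalIntegrable (fun x : ℝ => 2 * Real.pi / (A + sc * |x|)) volume (-L) 0 :=
    hgcont.intervalIntegrable _ _
  have hIi2 : IntervalIntegrable (fun x : ℝ => 2 * Real.pi / (A + sc * |x|)) volume 0 L :=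
    hgcont.intervalIntegrable _ _
  have e1 : (∫ x in (0:ℝ)..L, 2 * Real.pi / (A + sc * |x|))
      = 2 * Real.pi / sc * Real.log (A + sc * L) - 2 * Real.pi / sc * Real.log (A + sc * 0) := by
    rw [intervalIntegral.integral_congr (g := fun x => 2 * Real.pi / (A + sc * x))
      (fun x hx => by
        rw [Set.uIcc_of_le hL0.le] at hx
        simp only
        rw [abs_of_nonneg hx.1])]
    apply intervalIntegral.integral_eq_sub_of_hasDerivAt
      (f := fun x => 2 * Real.pi / sc * Real.log (A + sc * x))
    · intro x hx
      rw [Set.uIcc_of_le hL0.le] at hx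
      have hx0 : 0 < A + sc * x := by nlinarith [hx.1]
      have h1 : HasDerivAt (fun x : ℝ => A + sc * x) sc x := by
        simpa using ((hasDerivAt_id x).const_mul sc).const_add A
      have h2 := (h1.log (ne_of_gt hx0)).const_mul (2 * Real.pi / sc)
      convert h2 using 1
      · rfl
      rw [← mul_div_assoc, div_mul_cancel₀ _ hsc0.ne']
    · apply ContinuousOn.intervalIntegrable
      apply ContinuousOn.div continuousOn_const (by fun_prop)
      intro x hx
      rw [Set.uIcc_of_le hL0.le] at hx
      nlinarith [hx.1]
  have e2 : (∫ x in (-L)..(0:ℝ), 2 * Real.pi / (A + sc * |x|))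
      = -(2 * Real.pi / sc) * Real.log (A - sc * 0) - -(2 * Real.pi / sc) * Real.log (A - sc * (-L)) := by
    rw [intervalIntegral.integral_congr (g := fun x => 2 * Real.pi / (A - sc * x))
      (fun x hx => by
        rw [Set.uIcc_of_le (by linarith : -L ≤ (0:ℝ))] at hx
        simp only
        rw [abs_of_nonpos hx.2]
        ring_nf)]
    apply intervalIntegral.integral_eq_sub_of_hasDerivAt
      (f := fun x => -(2 * Real.pi / sc) * Real.log (A - sc * x))
    · intro x hx
      rw [Set.uIcc_of_le (by linarith : -L ≤ (0:ℝ))] at hx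
      have hx0 : 0 < A - sc * x := by nlinarith [hx.2]
      have h1 : HasDerivAt (fun x : ℝ => A - sc * x) (-sc) x := by
        simpa using ((hasDerivAt_id x).const_mul sc).const_sub A
      have h2 := (h1.log (ne_of_gt hx0)).const_mul (-(2 * Real.pi / sc))
      convert h2 using 1
      · rfl
      rw [neg_div, neg_mul_neg, ← mul_div_assoc, div_mul_cancel₀ _ hsc0.ne']
    · apply ContinuousOn.intervalIntegrable
      apply ContinuousOn.div continuousOn_const (by fun_prop)
      intro x hx
      rw [Set.uIcc_of_le (by linarith : -L ≤ (0:ℝ))] at hx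
      nlinarith [hx.2]
  have hval : (∫ x, g x) = 4 * Real.pi / sc * (Real.log (A + sc * L) - Real.log A) := by
    dsimp only [g]
    rw [MeasureTheory.integral_indicator measurableSet_Icc,
      MeasureTheory.integral_Icc_eq_integral_Ioc,
      ← intervalIntegral.integral_of_le (by linarith : -L ≤ L),
      ← intervalIntegral.integral_add_adjacent_intervals hIi1 hIi2, e1, e2]
    have : A - sc * (-L) = A + sc * L := by ring
    rw [this]
    ring_nf
  -- arithmetic bound on the value
  have h1M : (1:ℝ) ≤ Real.sqrt (1 + M) := by
    have h := Real.sqrt_le_sqrt (show (1:ℝ) ≤ 1 + M by linarith)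
    rwa [Real.sqrt_one] at h
  have hAL : A + sc * L = (1 + Real.sqrt (1 + M)) * A := by
    rw [hscν, hLdef]
    field_simp
  have hlogsub : Real.log (A + sc * L) - Real.log A ≤ 3 / 2 * m := by
    have hle2 : A + sc * L ≤ 2 * Real.sqrt (1 + M) * A := by
      rw [hAL]; nlinarith
    have hlog1 : Real.log (A + sc * L) ≤ Real.log (2 * Real.sqrt (1 + M) * A) :=
      Real.log_le_log (by positivity) hle2
    have hlog2 : Real.log (2 * Real.sqrt (1 + M) * A)
        = Real.log 2 + Real.log (1 + M) / 2 + Real.log A := by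
      rw [Real.log_mul (by positivity) (ne_of_gt hA),
        Real.log_mul (by norm_num) (by positivity), Real.log_sqrt (by linarith)]
    have hl2 : Real.log 2 ≤ 1 := by
      have := Real.log_le_sub_one_of_pos (by norm_num : (0:ℝ) < 2)
      linarith
    have hlm : Real.log (1 + M) ≤ m := le_max_right _ _
    linarith
  have hscs : s * sν ≤ sc := by
    rw [hscν]
    apply mul_le_mul_of_nonneg_right _ hsν0.le
    apply max_le h1M
    exact Real.sqrt_le_sqrt (by linarith)
  have hs0 : s ≠ 0 := by positivity
  have hsν' : sν ≠ 0 := ne_of_gt hsν0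
  calc (∫ q : ℝ × ℝ, F q) = ∫ x : ℝ, ∫ y : ℝ, F (x, y) := hFub
    _ ≤ ∫ x, g x := hle
    _ = 4 * Real.pi / sc * (Real.log (A + sc * L) - Real.log A) := hval
    _ ≤ 4 * Real.pi / sc * (3 / 2 * m) :=
        mul_le_mul_of_nonneg_left hlogsub (by positivity)
    _ = 6 * Real.pi * m / sc := by ring
    _ ≤ 24 * m / (s * sν) := by
        apply div_le_div₀ (by positivity) _ (by positivity) hscs
        nlinarith [Real.pi_le_four, hm1]
    _ = 24 * sν⁻¹ * m / s := by field_simp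
end

section
/- For every γ > 0 there is a constant C_γ such that for all ν ∈ (0,1], A > 0 and M ≥ 0: ∫_{ℝ²} (min((|q₁|/A)^γ, (|q₁|/A)^{-γ})) / (ν·q₁² + q₂² + M·ν·q₁²) dq ≤ C_γ · ν^{-1/2} / (1 ∨ M^{1/2}). -/
open MeasureTheory Real Set

lemma aux_inv_eq (b : ℝ) (hb : 0 < b) (y : ℝ) :
    (b + y ^ 2)⁻¹ = b⁻¹ * (1 + (y / Real.sqrt b) ^ 2)⁻¹ := by
  have h1 : Real.sqrt b ^ 2 = b := Real.sq_sqrt hb.le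
  have h2 : (0:ℝ) < b + y ^ 2 := by positivity
  rw [div_pow, h1]
  field_simp

lemma aux_integrable_inv (b : ℝ) (hb : 0 < b) :
    Integrable (fun y : ℝ ↦ (b + y ^ 2)⁻¹) := by
  have : (fun y : ℝ ↦ (b + y ^ 2)⁻¹)
      = fun y : ℝ ↦ (fun t : ℝ ↦ b⁻¹ * (1 + t ^ 2)⁻¹) (y / Real.sqrt b) := by
    funext y; exact aux_inv_eq b hb y
  rw [this]
  exact (integrable_inv_one_add_sq.const_mul b⁻¹).comp_div
    (Real.sqrt_ne_zero'.mpr hb)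

lemma aux_integral_inv (b : ℝ) (hb : 0 < b) :
    ∫ y : ℝ, (b + y ^ 2)⁻¹ = Real.pi / Real.sqrt b := by
  have : (fun y : ℝ ↦ (b + y ^ 2)⁻¹)
      = fun y : ℝ ↦ (fun t : ℝ ↦ b⁻¹ * (1 + t ^ 2)⁻¹) (y / Real.sqrt b) := by
    funext y; exact aux_inv_eq b hb y
  rw [this, MeasureTheory.Measure.integral_comp_div (fun t : ℝ ↦ b⁻¹ * (1 + t ^ 2)⁻¹) (Real.sqrt b)]
  rw [MeasureTheory.integral_const_mul b⁻¹, integral_univ_inv_one_add_sq]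
  have hsb : 0 < Real.sqrt b := Real.sqrt_pos.mpr hb
  rw [abs_of_pos hsb, smul_eq_mul]
  have hbb : Real.sqrt b * Real.sqrt b = b := Real.mul_self_sqrt hb.le
  field_simp
  nlinarith [Real.pi_pos]

lemma aux_eqOn_Ioc {γ : ℝ} (hγ : 0 < γ) :
    ∀ u ∈ Ioc (0:ℝ) 1, min (u ^ γ) (u ^ (-γ)) / u = u ^ (γ - 1) := by
  rintro u ⟨hu, hu1⟩
  have h1 : u ^ γ ≤ 1 := Real.rpow_le_one hu.le hu1 hγ.le
  have h2 : 1 ≤ u ^ (-γ) :=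
    Real.one_le_rpow_of_pos_of_le_one_of_nonpos hu hu1 (by linarith)
  rw [min_eq_left (h1.trans h2), Real.rpow_sub hu, Real.rpow_one]

lemma aux_eqOn_Ioi {γ : ℝ} (hγ : 0 < γ) :
    ∀ u ∈ Ioi (1:ℝ), min (u ^ γ) (u ^ (-γ)) / u = u ^ (-γ - 1) := by
  intro u hu
  have hu1 : (1:ℝ) ≤ u := le_of_lt hu
  have hu0 : (0:ℝ) < u := lt_of_lt_of_le zero_lt_one hu1
  have h1 : u ^ (-γ) ≤ u ^ γ :=
    Real.rpow_le_rpow_of_exponent_le hu1 (by linarith)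
  rw [min_eq_right h1, Real.rpow_sub hu0, Real.rpow_one]

lemma aux_intOn_Ioc {γ : ℝ} (hγ : 0 < γ) :
    IntegrableOn (fun u : ℝ ↦ min (u ^ γ) (u ^ (-γ)) / u) (Ioc 0 1) := by
  have h : IntegrableOn (fun u : ℝ ↦ u ^ (γ - 1)) (Ioc 0 1) := by
    rw [← intervalIntegrable_iff_integrableOn_Ioc_of_le zero_le_one]
    exact intervalIntegral.intervalIntegrable_rpow' (by linarith)
  exact h.congr_fun (fun u hu ↦ (aux_eqOn_Ioc hγ u hu).symm) measurableSet_Ioc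

lemma aux_intOn_Ioi {γ : ℝ} (hγ : 0 < γ) :
    IntegrableOn (fun u : ℝ ↦ min (u ^ γ) (u ^ (-γ)) / u) (Ioi 1) := by
  have h : IntegrableOn (fun u : ℝ ↦ u ^ (-γ - 1)) (Ioi 1) :=
    integrableOn_Ioi_rpow_of_lt (by linarith) zero_lt_one
  exact h.congr_fun (fun u hu ↦ (aux_eqOn_Ioi hγ u hu).symm) measurableSet_Ioi

lemma aux_intOn_Ioi0 {γ : ℝ} (hγ : 0 < γ) :
    IntegrableOn (fun u : ℝ ↦ min (u ^ γ) (u ^ (-γ)) / u) (Ioi 0) := by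
  rw [← Ioc_union_Ioi_eq_Ioi (zero_le_one (α := ℝ))]
  exact (aux_intOn_Ioc hγ).union (aux_intOn_Ioi hγ)

lemma aux_integral_Ioi0 {γ : ℝ} (hγ : 0 < γ) :
    ∫ u in Ioi (0:ℝ), min (u ^ γ) (u ^ (-γ)) / u = 2 / γ := by
  rw [← Ioc_union_Ioi_eq_Ioi (zero_le_one (α := ℝ)),
    setIntegral_union (Ioc_disjoint_Ioi le_rfl) measurableSet_Ioi
      (aux_intOn_Ioc hγ) (aux_intOn_Ioi hγ)]
  have h1 : ∫ u in Ioc (0:ℝ) 1, min (u ^ γ) (u ^ (-γ)) / u = 1 / γ := by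
    rw [setIntegral_congr_fun measurableSet_Ioc (aux_eqOn_Ioc hγ),
      ← intervalIntegral.integral_of_le zero_le_one,
      integral_rpow (Or.inl (by linarith))]
    simp [Real.zero_rpow hγ.ne', sub_add_cancel]
  have h2 : ∫ u in Ioi (1:ℝ), min (u ^ γ) (u ^ (-γ)) / u = 1 / γ := by
    rw [setIntegral_congr_fun measurableSet_Ioi (aux_eqOn_Ioi hγ),
      integral_Ioi_rpow_of_lt (by linarith) zero_lt_one]
    rw [Real.one_rpow]
    field_simp
    rw [sub_add_cancel, div_neg, neg_neg, div_self hγ.ne']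
  rw [h1, h2]; ring

lemma aux_integrable_comp_abs {f : ℝ → ℝ} (hf : IntegrableOn f (Ioi 0)) :
    Integrable (fun x ↦ f |x|) := by
  have hfI : IntegrableOn (fun x ↦ f |x|) (Ioi 0) :=
    hf.congr_fun (fun x hx ↦ by rw [abs_of_pos hx]) measurableSet_Ioi
  have int_Iic : IntegrableOn (fun x ↦ f |x|) (Iic 0) := by
    rw [← Measure.map_neg_eq_self (volume : Measure ℝ)]
    have m : MeasurableEmbedding fun x : ℝ => -x := (Homeomorph.neg ℝ).measurableEmbedding
    rw [m.integrableOn_map_iff]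
    simp_rw [Function.comp_def, abs_neg, neg_preimage, neg_Iic, neg_zero]
    exact Iff.mpr integrableOn_Ici_iff_integrableOn_Ioi hfI
  rw [← integrableOn_univ, ← Iic_union_Ioi (a := (0:ℝ))]
  exact int_Iic.union hfI

lemma aux_abs_integrable {γ : ℝ} (hγ : 0 < γ) :
    Integrable (fun x : ℝ ↦ min (|x| ^ γ) (|x| ^ (-γ)) / |x|) :=
  aux_integrable_comp_abs (f := fun u ↦ min (u ^ γ) (u ^ (-γ)) / u) (aux_intOn_Ioi0 hγ)

lemma aux_abs_integral {γ : ℝ} (hγ : 0 < γ) :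
    ∫ x : ℝ, min (|x| ^ γ) (|x| ^ (-γ)) / |x| = 4 / γ := by
  rw [integral_comp_abs (f := fun u ↦ min (u ^ γ) (u ^ (-γ)) / u), aux_integral_Ioi0 hγ]
  ring

lemma aux_m_eq {γ A : ℝ} (hA : 0 < A) (x : ℝ) :
    min ((|x| / A) ^ γ) ((|x| / A) ^ (-γ)) / |x|
      = A⁻¹ * ((fun u : ℝ ↦ min (|u| ^ γ) (|u| ^ (-γ)) / |u|) (x / A)) := by
  have h1 : |x / A| = |x| / A := by rw [abs_div, abs_of_pos hA]
  simp only [h1]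
  rw [div_div_eq_mul_div, ← mul_div_assoc, mul_comm A⁻¹, mul_assoc,
    mul_inv_cancel₀ hA.ne', mul_one]

lemma aux_m_integrable {γ A : ℝ} (hγ : 0 < γ) (hA : 0 < A) :
    Integrable (fun x : ℝ ↦ min ((|x| / A) ^ γ) ((|x| / A) ^ (-γ)) / |x|) := by
  have := ((aux_abs_integrable hγ).comp_div hA.ne').const_mul A⁻¹
  exact this.congr (Filter.Eventually.of_forall fun x ↦ (aux_m_eq hA x).symm)

lemma aux_m_integral {γ A : ℝ} (hγ : 0 < γ) (hA : 0 < A) :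
    ∫ x : ℝ, min ((|x| / A) ^ γ) ((|x| / A) ^ (-γ)) / |x| = 4 / γ := by
  calc ∫ x : ℝ, min ((|x| / A) ^ γ) ((|x| / A) ^ (-γ)) / |x|
      = ∫ x : ℝ, A⁻¹ * ((fun u : ℝ ↦ min (|u| ^ γ) (|u| ^ (-γ)) / |u|) (x / A)) := by
        congr 1; funext x; exact aux_m_eq hA x
    _ = A⁻¹ * ∫ x : ℝ, (fun u : ℝ ↦ min (|u| ^ γ) (|u| ^ (-γ)) / |u|) (x / A) :=
        MeasureTheory.integral_const_mul _ _
    _ = A⁻¹ * (|A| • ∫ u : ℝ, min (|u| ^ γ) (|u| ^ (-γ)) / |u|) := by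
        congr 1
        exact MeasureTheory.Measure.integral_comp_div
          (fun u : ℝ ↦ min (|u| ^ γ) (|u| ^ (-γ)) / |u|) A
    _ = 4 / γ := by
        rw [aux_abs_integral hγ, abs_of_pos hA, smul_eq_mul, ← mul_assoc,
          inv_mul_cancel₀ hA.ne', one_mul]

theorem stmt11 (γ : ℝ) (hγ : 0 < γ) :
    ∃ C : ℝ, 0 < C ∧ ∀ ν A M : ℝ, 0 < ν → ν ≤ 1 → 0 < A → 0 ≤ M →
      (∫ q : ℝ × ℝ,
          min ((|q.1| / A) ^ γ) ((|q.1| / A) ^ (-γ)) /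
            (ν * q.1 ^ 2 + q.2 ^ 2 + M * ν * q.1 ^ 2))
        ≤ C * (Real.sqrt ν)⁻¹ / max 1 (Real.sqrt M) := by
  refine ⟨4 * Real.pi / γ, by positivity, ?_⟩
  intro ν A M hν hν1 hA hM
  set m : ℝ → ℝ := fun x ↦ min ((|x| / A) ^ γ) ((|x| / A) ^ (-γ)) with hm
  have hm0 : ∀ x, 0 ≤ m x := fun x ↦
    le_min (Real.rpow_nonneg (by positivity) _) (Real.rpow_nonneg (by positivity) _)
  set B : ℝ := (1 + M) * ν with hBdef
  have hB0 : 0 < B := by positivity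
  have hsB : 0 < Real.sqrt B := Real.sqrt_pos.mpr hB0
  have heq : (fun q : ℝ × ℝ ↦ min ((|q.1| / A) ^ γ) ((|q.1| / A) ^ (-γ)) /
      (ν * q.1 ^ 2 + q.2 ^ 2 + M * ν * q.1 ^ 2))
      = fun q : ℝ × ℝ ↦ m q.1 / (B * q.1 ^ 2 + q.2 ^ 2) := by
    funext q; rw [hm]; congr 1; rw [hBdef]; ring
  rw [heq]
  set F : ℝ × ℝ → ℝ := fun q ↦ m q.1 / (B * q.1 ^ 2 + q.2 ^ 2) with hF
  have hFmeas : Measurable F := by rw [hF, hm]; fun_prop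
  have hF0 : ∀ q, 0 ≤ F q := fun q ↦ div_nonneg (hm0 _) (by positivity)
  have h1 : ∫ q, F q = (∫⁻ q, ENNReal.ofReal (F q)).toReal :=
    integral_eq_lintegral_of_nonneg_ae (Filter.Eventually.of_forall hF0)
      hFmeas.aestronglyMeasurable
  have hinner : ∀ x : ℝ, (∫⁻ y : ℝ, ENNReal.ofReal (F (x, y)))
      = ENNReal.ofReal (Real.pi / Real.sqrt B * (m x / |x|)) := by
    intro x
    rcases eq_or_ne x 0 with rfl | hx
    · have hm00 : m 0 = 0 := by
        rw [hm]
        simp [Real.zero_rpow hγ.ne', Real.zero_rpow (neg_ne_zero.mpr hγ.ne')]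
    
      simp [hF, hm00]
    · have hb : 0 < B * x ^ 2 := by positivity
      have hint : Integrable (fun y : ℝ ↦ m x * (B * x ^ 2 + y ^ 2)⁻¹) :=
        (aux_integrable_inv _ hb).const_mul _
      have hnn : 0 ≤ᵐ[volume] fun y : ℝ ↦ m x * (B * x ^ 2 + y ^ 2)⁻¹ :=
        Filter.Eventually.of_forall fun y ↦ mul_nonneg (hm0 x) (by positivity)
      have hFe : ∀ y : ℝ, F (x, y) = m x * (B * x ^ 2 + y ^ 2)⁻¹ := fun y ↦ by
        rw [hF]; exact div_eq_mul_inv _ _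
      simp_rw [hFe]
      rw [← MeasureTheory.ofReal_integral_eq_lintegral_ofReal hint hnn,
        MeasureTheory.integral_const_mul, aux_integral_inv _ hb]
      congr 1
      rw [show Real.sqrt (B * x ^ 2) = Real.sqrt B * |x| by
        rw [Real.sqrt_mul hB0.le, Real.sqrt_sq_eq_abs]]
      have hxne : |x| ≠ 0 := abs_ne_zero.mpr hx
      field_simp
  have h2 : (∫⁻ q : ℝ × ℝ, ENNReal.ofReal (F q))
      = ENNReal.ofReal (Real.pi / Real.sqrt B * (4 / γ)) := by
    rw [MeasureTheory.Measure.volume_eq_prod,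
      MeasureTheory.lintegral_prod _ hFmeas.ennreal_ofReal.aemeasurable]
    simp_rw [hinner]
    have hint : Integrable (fun x : ℝ ↦ Real.pi / Real.sqrt B * (m x / |x|)) := by
      have := (aux_m_integrable (A := A) hγ hA).const_mul (Real.pi / Real.sqrt B)
      rw [hm]; exact this
    have hnn : 0 ≤ᵐ[volume] fun x : ℝ ↦ Real.pi / Real.sqrt B * (m x / |x|) :=
      Filter.Eventually.of_forall fun x ↦
        mul_nonneg (by positivity) (div_nonneg (hm0 x) (abs_nonneg _))
    rw [← MeasureTheory.ofReal_integral_eq_lintegral_ofReal hint hnn,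
      MeasureTheory.integral_const_mul]
    congr 1
    rw [hm]
    rw [aux_m_integral hγ hA]
  rw [h1, h2, ENNReal.toReal_ofReal (by positivity)]
  have hmax : (0:ℝ) < max 1 (Real.sqrt M) := lt_of_lt_of_le one_pos (le_max_left _ _)
  have hs1M : 0 < Real.sqrt (1 + M) := Real.sqrt_pos.mpr (by linarith)
  have hsν : 0 < Real.sqrt ν := Real.sqrt_pos.mpr hν
  have hmaxle : max 1 (Real.sqrt M) ≤ Real.sqrt (1 + M) := by
    refine max_le ?_ (Real.sqrt_le_sqrt (by linarith))
    nlinarith [Real.sq_sqrt (show (0:ℝ) ≤ 1 + M by linarith),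
      Real.sqrt_nonneg (1 + M)]
  have hBs : Real.sqrt B = Real.sqrt (1 + M) * Real.sqrt ν := by
    rw [hBdef]; exact Real.sqrt_mul (by linarith) ν
  rw [hBs]
  calc Real.pi / (Real.sqrt (1 + M) * Real.sqrt ν) * (4 / γ)
      = (4 * Real.pi / γ * (Real.sqrt ν)⁻¹) * (Real.sqrt (1 + M))⁻¹ := by
        field_simp
    _ ≤ (4 * Real.pi / γ * (Real.sqrt ν)⁻¹) * (max 1 (Real.sqrt M))⁻¹ := by
        apply mul_le_mul_of_nonneg_left (inv_anti₀ hmax hmaxle) (by positivity)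
    _ = 4 * Real.pi / γ * (Real.sqrt ν)⁻¹ / max 1 (Real.sqrt M) := by
        rw [div_eq_mul_inv]; ring
end
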